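/- Let Σ = ℕ^ℕ with the product topology (ℕ discrete) and its Borel σ-algebra. Let (μ_x)_{x∈Σ} be a family of Borel probability measures on Σ such that: (i) there is a constant K ≥ 1 with μ_x(E) ≤ K·μ_y(E) for all x, y ∈ Σ and all Borel sets E ⊆ Σ; and (ii) for every bounded Borel measurable φ : Σ → ℝ, the map x ↦ ∫ φ dμ_x is continuous on Σ. Let Φ : Σ × Σ → ℝ be bounded and jointly Borel measurable, let z ∈ Σ, and assume that for every s ∈ Σ the function x ↦ Φ(s,x) is continuous at z. Then the function x ↦ ∫_Σ Φ(s,x) dμ_x(s) is continuous at z. -/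

import Mathlib

open MeasureTheory Filter Topology

/-- **Lemma 2.8.** Let `(μ_x)` be a family of Borel probabilities on `Σ = ℕ^ℕ` with
uniformly comparable measures (`μ_x(E) ≤ K μ_y(E)`) whose integrals of bounded measurable
functions depend continuously on the base point. If `Φ : Σ × Σ → ℝ` is bounded measurable
and, for each fixed first variable, continuous at `z` in the second variable, then
`x ↦ ∫ Φ(s,x) dμ_x(s)` is continuous at `z`. -/
theorem stmt9 (μ : (ℕ → ℕ) → Measure (ℕ → ℕ))
    (hprob : ∀ x, IsProbabilityMeasure (μ x))
    (K : ℝ) (hK : 1 ≤ K)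
    (hdom : ∀ x y : ℕ → ℕ, ∀ E : Set (ℕ → ℕ), MeasurableSet E →
      μ x E ≤ ENNReal.ofReal K * μ y E)
    (hcont : ∀ φ : (ℕ → ℕ) → ℝ, Measurable φ → (∃ Cb : ℝ, ∀ s, |φ s| ≤ Cb) →
      Continuous fun x => ∫ s, φ s ∂(μ x))
    (Φ : (ℕ → ℕ) × (ℕ → ℕ) → ℝ) (hΦm : Measurable Φ)
    (hΦb : ∃ Cb : ℝ, ∀ p, |Φ p| ≤ Cb)
    (z : ℕ → ℕ) (hΦc : ∀ s : ℕ → ℕ, ContinuousAt (fun x => Φ (s, x)) z) :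
    ContinuousAt (fun x => ∫ s, Φ (s, x) ∂(μ x)) z := by
  obtain ⟨C, hC⟩ := hΦb
  have hC0 : 0 ≤ C := (abs_nonneg _).trans (hC (z, z))
  have hK0 : 0 ≤ K := le_trans zero_le_one hK
  have hmeas : ∀ x : ℕ → ℕ, Measurable fun s => Φ (s, x) :=
    fun x => hΦm.comp (measurable_id.prodMk measurable_const)
  have hint : ∀ x y : ℕ → ℕ, Integrable (fun s => Φ (s, x)) (μ y) := fun x y =>
    ⟨(hmeas x).aestronglyMeasurable,
      HasFiniteIntegral.of_bounded (C := C) (Filter.Eventually.of_forall fun s => by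
        simpa [Real.norm_eq_abs] using hC (s, x))⟩
  have hle : ∀ x, μ x ≤ (ENNReal.ofReal K) • μ z := fun x => by
    refine Measure.le_iff.2 fun E hE => ?_
    simpa [Measure.smul_apply, smul_eq_mul] using hdom x z E hE
  have hcomp : ∀ ψ : (ℕ → ℕ) → ℝ, Measurable ψ → (∀ s, 0 ≤ ψ s) → (∀ s, ψ s ≤ 2 * C) →
      ∀ x, ∫ s, ψ s ∂(μ x) ≤ K * ∫ s, ψ s ∂(μ z) := by
    intro ψ hm h0 hb x
    have h1 : ∀ y : ℕ → ℕ, ∫ s, ψ s ∂(μ y) = (∫⁻ s, ENNReal.ofReal (ψ s) ∂(μ y)).toReal :=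
      fun y => integral_eq_lintegral_of_nonneg_ae (Filter.Eventually.of_forall h0)
        hm.aestronglyMeasurable
    have hz_top : (∫⁻ s, ENNReal.ofReal (ψ s) ∂(μ z)) ≤ ENNReal.ofReal (2 * C) := by
      calc ∫⁻ s, ENNReal.ofReal (ψ s) ∂(μ z) ≤ ∫⁻ _, ENNReal.ofReal (2 * C) ∂(μ z) :=
            lintegral_mono fun s => ENNReal.ofReal_le_ofReal (hb s)
        _ = ENNReal.ofReal (2 * C) := by simp [(hprob z).measure_univ]
    have hlin : (∫⁻ s, ENNReal.ofReal (ψ s) ∂(μ x)) ≤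
        ENNReal.ofReal K * ∫⁻ s, ENNReal.ofReal (ψ s) ∂(μ z) := by
      calc (∫⁻ s, ENNReal.ofReal (ψ s) ∂(μ x))
          ≤ ∫⁻ s, ENNReal.ofReal (ψ s) ∂((ENNReal.ofReal K) • μ z) :=
            lintegral_mono' (hle x) le_rfl
        _ = ENNReal.ofReal K * ∫⁻ s, ENNReal.ofReal (ψ s) ∂(μ z) := lintegral_smul_measure _ _
    rw [h1 x, h1 z]
    have hne : ENNReal.ofReal K * ∫⁻ s, ENNReal.ofReal (ψ s) ∂(μ z) ≠ ⊤ :=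
      ENNReal.mul_ne_top ENNReal.ofReal_ne_top (lt_of_le_of_lt hz_top ENNReal.ofReal_lt_top).ne
    calc (∫⁻ s, ENNReal.ofReal (ψ s) ∂(μ x)).toReal
        ≤ (ENNReal.ofReal K * ∫⁻ s, ENNReal.ofReal (ψ s) ∂(μ z)).toReal :=
          ENNReal.toReal_mono hne hlin
      _ = K * (∫⁻ s, ENNReal.ofReal (ψ s) ∂(μ z)).toReal := by
          rw [ENNReal.toReal_mul, ENNReal.toReal_ofReal hK0]
  have hDmeas : ∀ x, Measurable fun s => |Φ (s, x) - Φ (s, z)| :=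
    fun x => ((hmeas x).sub (hmeas z)).abs
  have hDbound : ∀ x s, |Φ (s, x) - Φ (s, z)| ≤ 2 * C := by
    intro x s
    calc |Φ (s, x) - Φ (s, z)| ≤ |Φ (s, x)| + |Φ (s, z)| := abs_sub _ _
      _ ≤ C + C := add_le_add (hC _) (hC _)
      _ = 2 * C := by ring
  have hD : Tendsto (fun x => ∫ s, |Φ (s, x) - Φ (s, z)| ∂(μ z)) (𝓝 z) (𝓝 0) := by
    rw [tendsto_iff_seq_tendsto]
    intro u hu
    have := tendsto_integral_of_dominated_convergence (μ := μ z)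
      (F := fun n s => |Φ (s, u n) - Φ (s, z)|) (f := fun _ => (0 : ℝ))
      (bound := fun _ => 2 * C)
      (fun n => (hDmeas (u n)).aestronglyMeasurable)
      (integrable_const _)
      (fun n => Filter.Eventually.of_forall fun s => by
        rw [Real.norm_eq_abs, abs_abs]; exact hDbound (u n) s)
      (Filter.Eventually.of_forall fun s => by
        have h := (hΦc s).tendsto.comp hu
        have h2 : Tendsto (fun n => Φ (s, u n) - Φ (s, z)) atTop (𝓝 (Φ (s, z) - Φ (s, z))) :=
          h.sub tendsto_const_nhds
        simpa using h2.abs)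
    simpa [Function.comp_def] using this
  have hJ : Continuous fun x => ∫ s, Φ (s, z) ∂(μ x) :=
    hcont _ (hmeas z) ⟨C, fun s => hC _⟩
  have hdiff : Tendsto (fun x => ∫ s, Φ (s, x) ∂(μ x) - ∫ s, Φ (s, z) ∂(μ x)) (𝓝 z) (𝓝 0) := by
    refine squeeze_zero_norm (a := fun x => K * ∫ s, |Φ (s, x) - Φ (s, z)| ∂(μ z)) ?_ ?_
    · intro x
      rw [Real.norm_eq_abs, ← integral_sub (hint x x) (hint z x)]
      calc |∫ s, (Φ (s, x) - Φ (s, z)) ∂(μ x)| ≤ ∫ s, |Φ (s, x) - Φ (s, z)| ∂(μ x) := by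
            simpa [Real.norm_eq_abs] using
              norm_integral_le_integral_norm (μ := μ x) (fun s => Φ (s, x) - Φ (s, z))
        _ ≤ K * ∫ s, |Φ (s, x) - Φ (s, z)| ∂(μ z) :=
            hcomp _ (hDmeas x) (fun s => abs_nonneg _) (hDbound x) x
    · simpa using hD.const_mul K
  have hfinal : Tendsto (fun x => (∫ s, Φ (s, x) ∂(μ x) - ∫ s, Φ (s, z) ∂(μ x))
      + ∫ s, Φ (s, z) ∂(μ x)) (𝓝 z) (𝓝 (0 + ∫ s, Φ (s, z) ∂(μ z))) :=
    hdiff.add (hJ.tendsto z)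
  simpa [ContinuousAt] using hfinal
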